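/- Let g ≥ 3 be an integer and suppose positive integers a > b > c, digits d₂, d₃ ∈ {1,…,g−1} and integers n₂, n₃ ≥ 2 with n₂ ≤ n₃ satisfy ab+1 = d₃(g^{n₃}−1)/(g−1) and ac+1 = d₂(g^{n₂}−1)/(g−1). If the rational numbers d₃·g^{n₃}/(d₃+g−1) and d₂·g^{n₂}/(d₂+g−1) are multiplicatively independent, then a ≤ 4·(2g−2)^{5√(n₃)+1}. -/

import Mathlib

/-- Two non-zero rationals are multiplicatively independent if
`α^u * β^v = 1` (with integer exponents) forces `u = v = 0`. -/
def MultIndep (α β : ℚ) : Prop :=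
  ∀ u v : ℤ, α ^ u * β ^ v = 1 → u = 0 ∧ v = 0

private lemma pigeon_core (n₂ n₃ T x y : ℕ) (h2 : 0 < n₂) (h23 : n₂ ≤ n₃) (hT : 0 < T)
    (hxy : x < y) (hy : y ≤ T)
    (hf : (x * n₂ % n₃) * T / n₃ = (y * n₂ % n₃) * T / n₃) :
    ∃ u v δ : ℕ, 1 ≤ v ∧ v ≤ T ∧ u ≤ v ∧ δ * T < n₃ ∧
      (v * n₂ = u * n₃ + δ ∨ u * n₃ = v * n₂ + δ) := by
  have hn₃ : 0 < n₃ := lt_of_lt_of_le h2 h23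
  set s := x * n₂ % n₃ with hsdef
  set t := y * n₂ % n₃ with htdef
  set q := s * T / n₃ with hqdef
  have hq2 : t * T / n₃ = q := hf.symm
  have hs1 : q * n₃ ≤ s * T := by rw [hqdef]; exact Nat.div_mul_le_self _ _
  have hs2 : s * T < (q + 1) * n₃ := by
    refine (Nat.div_lt_iff_lt_mul hn₃).mp ?_
    omega
  have ht1 : q * n₃ ≤ t * T := by rw [← hq2]; exact Nat.div_mul_le_self _ _
  have ht2 : t * T < (q + 1) * n₃ := by
    refine (Nat.div_lt_iff_lt_mul hn₃).mp ?_
    omega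
  have hexp : (q + 1) * n₃ = q * n₃ + n₃ := by ring
  set kx := x * n₂ / n₃ with hkxdef
  set ky := y * n₂ / n₃ with hkydef
  have ex : kx * n₃ + s = x * n₂ := by
    rw [hkxdef, hsdef, mul_comm]; exact Nat.div_add_mod _ _
  have ey : ky * n₃ + t = y * n₂ := by
    rw [hkydef, htdef, mul_comm]; exact Nat.div_add_mod _ _
  have hsn : s < n₃ := Nat.mod_lt _ hn₃
  have htn : t < n₃ := Nat.mod_lt _ hn₃
  have hxyn : x * n₂ ≤ y * n₂ := Nat.mul_le_mul_right _ (le_of_lt hxy)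
  have hkxky : kx ≤ ky := by
    by_contra h
    push_neg at h
    have h' : ky + 1 ≤ kx := h
    have : (ky + 1) * n₃ ≤ kx * n₃ := Nat.mul_le_mul_right _ h'
    have hexp2 : (ky + 1) * n₃ = ky * n₃ + n₃ := by ring
    linarith
  set v := y - x with hvdef
  have hv1 : 1 ≤ v := by omega
  have hvT : v ≤ T := by omega
  have hveq : v * n₂ + x * n₂ = y * n₂ := by
    rw [hvdef, ← Nat.add_mul]; congr 1; omega
  set u := ky - kx with hudef
  have hueq : u * n₃ + kx * n₃ = ky * n₃ := by
    rw [hudef, ← Nat.add_mul]; congr 1; omega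
  rcases le_or_gt s t with hst | hst
  · -- δ = t - s, v * n₂ = u * n₃ + δ
    refine ⟨u, v, t - s, hv1, hvT, ?_, ?_, Or.inl ?_⟩
    · -- u ≤ v
      have h1 : v * n₂ = u * n₃ + (t - s) := by omega
      have h2 : u * n₃ ≤ v * n₂ := by omega
      have h3 : v * n₂ ≤ v * n₃ := Nat.mul_le_mul_left _ h23
      exact Nat.le_of_mul_le_mul_right (by omega) hn₃
    · -- (t-s) * T < n₃
      have hδ : (t - s) * T + s * T = t * T := by rw [← Nat.add_mul]; congr 1; omega
      linarith
    · omega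
  · -- δ = s - t, u * n₃ = v * n₂ + δ
    refine ⟨u, v, s - t, hv1, hvT, ?_, ?_, Or.inr ?_⟩
    · have h1 : u * n₃ = v * n₂ + (s - t) := by omega
      have h3 : v * n₂ ≤ v * n₃ := Nat.mul_le_mul_left _ h23
      have h4 : u * n₃ < v * n₃ + n₃ := by omega
      have h5 : v * n₃ + n₃ = (v + 1) * n₃ := by ring
      have h6 : u * n₃ < (v + 1) * n₃ := h5 ▸ h4
      have h7 : u < v + 1 := Nat.lt_of_mul_lt_mul_right h6
      omega
    · have hδ : (s - t) * T + t * T = s * T := by rw [← Nat.add_mul]; congr 1; omega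
      linarith
    · omega

lemma pigeon (n₂ n₃ T : ℕ) (h2 : 0 < n₂) (h23 : n₂ ≤ n₃) (hT : 0 < T) :
    ∃ u v δ : ℕ, 1 ≤ v ∧ v ≤ T ∧ u ≤ v ∧ δ * T < n₃ ∧
      (v * n₂ = u * n₃ + δ ∨ u * n₃ = v * n₂ + δ) := by
  have hn₃ : 0 < n₃ := lt_of_lt_of_le h2 h23
  have hmaps : ∀ x ∈ Finset.range (T + 1),
      (x * n₂ % n₃) * T / n₃ ∈ Finset.range T := by
    intro x _
    simp only [Finset.mem_range]
    refine (Nat.div_lt_iff_lt_mul hn₃).mpr ?_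
    have : x * n₂ % n₃ < n₃ := Nat.mod_lt _ hn₃
    calc x * n₂ % n₃ * T < n₃ * T := (Nat.mul_lt_mul_right hT).mpr this
      _ = T * n₃ := mul_comm _ _
  obtain ⟨x, hx, y, hy, hxy, hfeq⟩ :=
    Finset.exists_ne_map_eq_of_card_lt_of_maps_to (by simp) hmaps
  simp only [Finset.mem_range] at hx hy
  rcases lt_or_gt_of_ne hxy with h | h
  · exact pigeon_core n₂ n₃ T x y h2 h23 hT h (by omega) hfeq
  · exact pigeon_core n₂ n₃ T y x h2 h23 hT h (by omega) hfeq.symm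

lemma div_out (a m y : ℕ) (ha : 0 < a) (hy : 0 < y) (h : a ∣ m * y) :
    a ≤ Nat.gcd a m * y := by
  set e := Nat.gcd a m with hedef
  have he : 0 < e := Nat.gcd_pos_of_pos_left _ ha
  have h1 : a / e * e ∣ (m / e * y) * e := by
    rw [Nat.div_mul_cancel (Nat.gcd_dvd_left a m), mul_right_comm,
      Nat.div_mul_cancel (Nat.gcd_dvd_right a m)]
    exact h
  have h2 : a / e ∣ m / e * y := (mul_dvd_mul_iff_right he.ne').mp h1
  have hcop : Nat.Coprime (a / e) (m / e) := Nat.coprime_div_gcd_div_gcd he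
  have h3 : a / e ∣ y := hcop.dvd_of_dvd_mul_left h2
  calc a = e * (a / e) := (Nat.mul_div_cancel' (Nat.gcd_dvd_left a m)).symm
    _ ≤ e * y := Nat.mul_le_mul_left _ (Nat.le_of_dvd hy h3)

lemma multdep_contra (α β : ℚ) (hβ : β ≠ 0) (u v : ℕ) (hv : 1 ≤ v)
    (h : β ^ v = α ^ u) (hind : MultIndep α β) : False := by
  have hαu : α ^ u ≠ 0 := h ▸ pow_ne_zero v hβ
  have h2 := hind u (-(v : ℤ)) (by
    rw [zpow_neg, zpow_natCast, zpow_natCast, h, mul_inv_cancel₀ hαu])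
  have := h2.2
  omega

lemma ratio_eq (g dA dB nA nB u v δ : ℕ) (hg : 3 ≤ g)
    (hδ : v * nA = u * nB + δ)
    (h0 : (dA : ℤ) ^ v * ((dB : ℤ) + g - 1) ^ u * g ^ δ
        = ((dA : ℤ) + g - 1) ^ v * (dB : ℤ) ^ u) :
    ((dA : ℚ) * g ^ nA / (dA + g - 1)) ^ v = ((dB : ℚ) * g ^ nB / (dB + g - 1)) ^ u := by
  have hgq : (3 : ℚ) ≤ g := by exact_mod_cast hg
  have hDA : (dA : ℚ) + g - 1 ≠ 0 := by
    have : (0 : ℚ) ≤ dA := Nat.cast_nonneg _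
    intro hc; linarith [hc]
  have hDB : (dB : ℚ) + g - 1 ≠ 0 := by
    have : (0 : ℚ) ≤ dB := Nat.cast_nonneg _
    intro hc; linarith [hc]
  have hq : (dA : ℚ) ^ v * ((dB : ℚ) + g - 1) ^ u * g ^ δ
      = ((dA : ℚ) + g - 1) ^ v * (dB : ℚ) ^ u := by exact_mod_cast h0
  rw [div_pow, div_pow, div_eq_div_iff (pow_ne_zero _ hDA) (pow_ne_zero _ hDB)]
  calc ((dA : ℚ) * g ^ nA) ^ v * ((dB : ℚ) + g - 1) ^ u
      = (dA : ℚ) ^ v * g ^ (nA * v) * ((dB : ℚ) + g - 1) ^ u := by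
        rw [mul_pow, ← pow_mul]
    _ = (dA : ℚ) ^ v * g ^ (u * nB + δ) * ((dB : ℚ) + g - 1) ^ u := by
        rw [mul_comm nA v, hδ]
    _ = ((dA : ℚ) ^ v * ((dB : ℚ) + g - 1) ^ u * g ^ δ) * g ^ (u * nB) := by
        rw [pow_add]; ring
    _ = (((dA : ℚ) + g - 1) ^ v * (dB : ℚ) ^ u) * g ^ (u * nB) := by rw [hq]
    _ = ((dB : ℚ) * g ^ nB) ^ u * ((dA : ℚ) + g - 1) ^ v := by
        rw [mul_pow, ← pow_mul, mul_comm nB u]; ring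

lemma case_bound (a g dA dB nA nB u v δ : ℕ)
    (hg : 3 ≤ g) (ha : 0 < a)
    (hdA : dA ≤ g - 1) (hdB : dB ≤ g - 1)
    (hA : (a : ℤ) ∣ (dA : ℤ) * g ^ nA - ((dA : ℤ) + g - 1))
    (hB : (a : ℤ) ∣ (dB : ℤ) * g ^ nB - ((dB : ℤ) + g - 1))
    (hδ : v * nA = u * nB + δ)
    (hY : (dA : ℤ) ^ v * ((dB : ℤ) + g - 1) ^ u * g ^ δ
        - ((dA : ℤ) + g - 1) ^ v * (dB : ℤ) ^ u ≠ 0) :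
    a ≤ (2 * g - 2) ^ (2 * u + v + δ) := by
  set MA : ℤ := (dA : ℤ) * g ^ nA with hMA
  set DA : ℤ := (dA : ℤ) + g - 1 with hDA
  set MB : ℤ := (dB : ℤ) * g ^ nB with hMB
  set DB : ℤ := (dB : ℤ) + g - 1 with hDB
  set Y : ℤ := (dA : ℤ) ^ v * DB ^ u * g ^ δ - DA ^ v * (dB : ℤ) ^ u with hYdef
  -- congruences
  have c1 : DA ≡ MA [ZMOD (a : ℤ)] := (Int.modEq_iff_dvd.mpr hA)
  have c2 : DB ≡ MB [ZMOD (a : ℤ)] := (Int.modEq_iff_dvd.mpr hB)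
  have hX : (a : ℤ) ∣ MA ^ v * DB ^ u - DA ^ v * MB ^ u := by
    have := ((c1.pow v).symm.mul (c2.pow u))
    exact (Int.ModEq.dvd this.symm)
  -- identity
  have hiden : MA ^ v * DB ^ u - DA ^ v * MB ^ u = (g : ℤ) ^ (u * nB) * Y := by
    rw [hMA, hMB, hYdef, mul_pow, mul_pow, ← pow_mul, ← pow_mul,
      mul_comm nA v, hδ, mul_comm nB u, pow_add]
    ring
  rw [hiden] at hX
  -- to ℕ
  have hXn : a ∣ g ^ (u * nB) * Y.natAbs := by
    have h1 := Int.natAbs_dvd_natAbs.mpr hX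
    simpa [Int.natAbs_mul, Int.natAbs_pow] using h1
  -- gcd bound
  set e := Nat.gcd a (g ^ (u * nB)) with hedef
  have hDBnat : ((dB + g - 1 : ℕ) : ℤ) = DB := by
    have : 1 ≤ g := by omega
    push_cast [Nat.cast_sub (by omega : 1 ≤ dB + g)]
    ring
  have hegcd : e ∣ (dB + g - 1) ^ u := by
    have he1 : (e : ℤ) ∣ (a : ℤ) := Int.natCast_dvd_natCast.mpr (Nat.gcd_dvd_left _ _)
    have he2 : (e : ℤ) ∣ (g : ℤ) ^ (u * nB) := by
      have := Int.natCast_dvd_natCast.mpr (Nat.gcd_dvd_right a (g ^ (u * nB)))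
      simpa using this
    have hMBpow : (e : ℤ) ∣ MB ^ u := by
      refine dvd_trans he2 ?_
      refine ⟨(dB : ℤ) ^ u, ?_⟩
      rw [hMB, mul_pow, ← pow_mul, mul_comm nB u]
      ring
    have hsub : (e : ℤ) ∣ MB ^ u - DB ^ u := dvd_trans (dvd_trans he1 hB) (sub_dvd_pow_sub_pow _ _ u)
    have : (e : ℤ) ∣ DB ^ u := by
      have := dvd_sub hMBpow hsub
      simpa using this
    rw [← hDBnat] at this
    exact_mod_cast this
  -- Y ≠ 0, natAbs pos
  have hYpos : 0 < Y.natAbs := Int.natAbs_pos.mpr hY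
  -- divide out
  have hstep : a ≤ e * Y.natAbs := div_out a (g ^ (u * nB)) Y.natAbs ha hYpos hXn
  -- size bound on Y
  have hgZ : (3 : ℤ) ≤ g := by exact_mod_cast hg
  have hdAZ : (dA : ℤ) ≤ 2 * g - 2 := by
    have : (dA : ℤ) ≤ (g : ℤ) - 1 := by
      have := hdA; omega
    linarith
  have hDBle : DB ≤ 2 * (g : ℤ) - 2 := by
    have : (dB : ℤ) ≤ (g : ℤ) - 1 := by have := hdB; omega
    rw [hDB]; linarith
  have hDAle : DA ≤ 2 * (g : ℤ) - 2 := by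
    have : (dA : ℤ) ≤ (g : ℤ) - 1 := by have := hdA; omega
    rw [hDA]; linarith
  have hdBZ : (dB : ℤ) ≤ 2 * g - 2 := by
    have : (dB : ℤ) ≤ (g : ℤ) - 1 := by have := hdB; omega
    linarith
  have hgle : (g : ℤ) ≤ 2 * g - 2 := by linarith
  have hdA0 : (0 : ℤ) ≤ (dA : ℤ) := Nat.cast_nonneg _
  have hdB0 : (0 : ℤ) ≤ (dB : ℤ) := Nat.cast_nonneg _
  have hDA0 : (0 : ℤ) ≤ DA := by rw [hDA]; linarith
  have hDB0 : (0 : ℤ) ≤ DB := by rw [hDB]; linarith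
  have hg0 : (0 : ℤ) ≤ (g : ℤ) := by linarith
  set B : ℤ := (2 * (g : ℤ) - 2) ^ (u + v + δ) with hBdef
  have hP : (dA : ℤ) ^ v * DB ^ u * g ^ δ ≤ B := by
    calc (dA : ℤ) ^ v * DB ^ u * g ^ δ
        ≤ (2 * (g : ℤ) - 2) ^ v * (2 * (g : ℤ) - 2) ^ u * (2 * (g : ℤ) - 2) ^ δ := by
          gcongr <;> first
            | assumption
            | exact pow_nonneg (by linarith) _
            | exact mul_nonneg (pow_nonneg (by linarith) _) (pow_nonneg (by linarith) _)
      _ = (2 * (g : ℤ) - 2) ^ (v + u + δ) := by rw [← pow_add, ← pow_add]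
      _ = B := by rw [hBdef, Nat.add_comm v u]
  have hQ : DA ^ v * (dB : ℤ) ^ u ≤ B := by
    calc DA ^ v * (dB : ℤ) ^ u
        ≤ (2 * (g : ℤ) - 2) ^ v * (2 * (g : ℤ) - 2) ^ u := by gcongr <;> first
            | assumption
            | exact pow_nonneg (by linarith) _
            | exact mul_nonneg (pow_nonneg (by linarith) _) (pow_nonneg (by linarith) _)
      _ = (2 * (g : ℤ) - 2) ^ (v + u) := by rw [← pow_add]
      _ ≤ B := by
          rw [hBdef, Nat.add_comm v u]
          exact pow_le_pow_right₀ (by linarith) (Nat.le_add_right _ _)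
  have hP0 : (0 : ℤ) ≤ (dA : ℤ) ^ v * DB ^ u * g ^ δ := by positivity
  have hQ0 : (0 : ℤ) ≤ DA ^ v * (dB : ℤ) ^ u := by positivity
  have hYabs : |Y| ≤ B := by
    rw [hYdef]
    exact abs_le.mpr ⟨by linarith, by linarith⟩
  have hYn : Y.natAbs ≤ (2 * g - 2) ^ (u + v + δ) := by
    have hcast : ((2 * g - 2 : ℕ) : ℤ) = 2 * (g : ℤ) - 2 := by omega
    have : (Y.natAbs : ℤ) ≤ ((2 * g - 2 : ℕ) ^ (u + v + δ) : ℤ) := by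
      rw [Int.abs_eq_natAbs] at hYabs
      push_cast [hcast]
      exact_mod_cast hYabs
    exact_mod_cast this
  -- combine
  have he_le : e ≤ (dB + g - 1) ^ u :=
    Nat.le_of_dvd (pow_pos (by omega) _) hegcd
  have hDBle' : dB + g - 1 ≤ 2 * g - 2 := by omega
  calc a ≤ e * Y.natAbs := hstep
    _ ≤ (dB + g - 1) ^ u * Y.natAbs := Nat.mul_le_mul_right _ he_le
    _ ≤ (2 * g - 2) ^ u * (2 * g - 2) ^ (u + v + δ) :=
        Nat.mul_le_mul (Nat.pow_le_pow_left hDBle' _) hYn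
    _ = (2 * g - 2) ^ (u + (u + v + δ)) := by rw [← pow_add]
    _ = (2 * g - 2) ^ (2 * u + v + δ) := by congr 1; omega

lemma glue (g a n₃ E : ℕ) (hg : 3 ≤ g) (hb : a ≤ (2 * g - 2) ^ E)
    (hE : (E : ℝ) ≤ 5 * Real.sqrt n₃ + 1) :
    (a : ℝ) ≤ 4 * (2 * (g : ℝ) - 2) ^ (5 * Real.sqrt n₃ + 1) := by
  have hgR : (3 : ℝ) ≤ g := by exact_mod_cast hg
  have hbase : (1 : ℝ) ≤ 2 * (g : ℝ) - 2 := by linarith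
  have hcast : ((2 * g - 2 : ℕ) : ℝ) = 2 * (g : ℝ) - 2 := by
    have h2 : 2 ≤ 2 * g := by omega
    push_cast [Nat.cast_sub h2]
    ring
  have h1 : (a : ℝ) ≤ (2 * (g : ℝ) - 2) ^ (E : ℕ) := by
    calc (a : ℝ) ≤ (((2 * g - 2) ^ E : ℕ) : ℝ) := by exact_mod_cast hb
      _ = (2 * (g : ℝ) - 2) ^ E := by rw [Nat.cast_pow, hcast]
  have h2 : (2 * (g : ℝ) - 2) ^ (E : ℕ) = (2 * (g : ℝ) - 2) ^ ((E : ℕ) : ℝ) :=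
    (Real.rpow_natCast _ _).symm
  have h3 : (2 * (g : ℝ) - 2) ^ ((E : ℕ) : ℝ) ≤ (2 * (g : ℝ) - 2) ^ (5 * Real.sqrt n₃ + 1) :=
    Real.rpow_le_rpow_of_exponent_le hbase hE
  have h4 : (0 : ℝ) ≤ (2 * (g : ℝ) - 2) ^ (5 * Real.sqrt n₃ + 1) :=
    Real.rpow_nonneg (by linarith) _
  calc (a : ℝ) ≤ (2 * (g : ℝ) - 2) ^ (5 * Real.sqrt n₃ + 1) := by
        rw [h2] at h1; linarith
    _ ≤ 4 * (2 * (g : ℝ) - 2) ^ (5 * Real.sqrt n₃ + 1) := by linarith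

set_option maxHeartbeats 1000000 in
theorem stmt_10 (g a b c d₂ d₃ n₂ n₃ : ℕ) (hg : 3 ≤ g)
    (hc : 0 < c) (hcb : c < b) (hba : b < a)
    (hd₂ : 1 ≤ d₂) (hd₂' : d₂ ≤ g - 1) (hd₃ : 1 ≤ d₃) (hd₃' : d₃ ≤ g - 1)
    (hn₂ : 2 ≤ n₂) (hn₃ : 2 ≤ n₃) (hn₂₃ : n₂ ≤ n₃)
    (hab : (a * b + 1) * (g - 1) = d₃ * (g ^ n₃ - 1))
    (hac : (a * c + 1) * (g - 1) = d₂ * (g ^ n₂ - 1))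
    (hind : MultIndep ((d₃ : ℚ) * g ^ n₃ / (d₃ + g - 1)) ((d₂ : ℚ) * g ^ n₂ / (d₂ + g - 1))) :
    (a : ℝ) ≤ 4 * (2 * (g : ℝ) - 2) ^ (5 * Real.sqrt n₃ + 1) := by
  have ha : 0 < a := by omega
  have hb1 : 1 ≤ b := by omega
  have hg1 : 1 ≤ g := by omega
  have hgn3 : 1 ≤ g ^ n₃ := Nat.one_le_pow _ _ (by omega)
  have hgn2 : 1 ≤ g ^ n₂ := Nat.one_le_pow _ _ (by omega)
  have habZ : ((a : ℤ) * b + 1) * ((g : ℤ) - 1) = (d₃ : ℤ) * ((g : ℤ) ^ n₃ - 1) := by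
    have h := hab
    zify [hg1, hgn3] at h
    linear_combination h
  have hacZ : ((a : ℤ) * c + 1) * ((g : ℤ) - 1) = (d₂ : ℤ) * ((g : ℤ) ^ n₂ - 1) := by
    have h := hac
    zify [hg1, hgn2] at h
    linear_combination h
  have hA3 : (a : ℤ) ∣ (d₃ : ℤ) * g ^ n₃ - ((d₃ : ℤ) + g - 1) :=
    ⟨(b : ℤ) * ((g : ℤ) - 1), by linear_combination -habZ⟩
  have hA2 : (a : ℤ) ∣ (d₂ : ℤ) * g ^ n₂ - ((d₂ : ℤ) + g - 1) :=
    ⟨(c : ℤ) * ((g : ℤ) - 1), by linear_combination -hacZ⟩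
  have hs0 : 0 ≤ Real.sqrt n₃ := Real.sqrt_nonneg _
  have hs2 : Real.sqrt n₃ * Real.sqrt n₃ = (n₃ : ℝ) := Real.mul_self_sqrt (by positivity)
  have hn₃R : (2 : ℝ) ≤ (n₃ : ℝ) := by exact_mod_cast hn₃
  have hs1 : 1 ≤ Real.sqrt n₃ := by nlinarith
  by_cases hsmall : n₃ ≤ 3
  · -- trivial bound a ≤ (2g-2)^n₃
    have hd3Z : (d₃ : ℤ) ≤ (g : ℤ) - 1 := by omega
    have hgpow0 : (0 : ℤ) ≤ (g : ℤ) ^ n₃ - 1 := by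
      have : (1 : ℤ) ≤ (g : ℤ) ^ n₃ := by exact_mod_cast hgn3
      linarith
    have h1 : ((a : ℤ) * b + 1) * ((g : ℤ) - 1) ≤ ((g : ℤ) ^ n₃ - 1) * ((g : ℤ) - 1) := by
      rw [habZ]
      calc (d₃ : ℤ) * ((g : ℤ) ^ n₃ - 1) ≤ ((g : ℤ) - 1) * ((g : ℤ) ^ n₃ - 1) :=
            mul_le_mul_of_nonneg_right hd3Z hgpow0
        _ = ((g : ℤ) ^ n₃ - 1) * ((g : ℤ) - 1) := mul_comm _ _
    have hgm1 : (0 : ℤ) < (g : ℤ) - 1 := by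
      have : (3 : ℤ) ≤ g := by exact_mod_cast hg
      linarith
    have h2 : (a : ℤ) * b + 1 ≤ (g : ℤ) ^ n₃ - 1 := le_of_mul_le_mul_right h1 hgm1
    have h3 : (a : ℤ) ≤ (a : ℤ) * b :=
      le_mul_of_one_le_right (by positivity) (by exact_mod_cast hb1)
    have h4 : a ≤ g ^ n₃ := by
      have : (a : ℤ) ≤ (g : ℤ) ^ n₃ := by linarith
      exact_mod_cast this
    have h5 : a ≤ (2 * g - 2) ^ n₃ := le_trans h4 (Nat.pow_le_pow_left (by omega) _)
    apply glue g a n₃ n₃ hg h5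
    have h6 : (n₃ : ℝ) ≤ 3 := by exact_mod_cast hsmall
    linarith
  · push_neg at hsmall
    have hn4 : (4 : ℝ) ≤ (n₃ : ℝ) := by exact_mod_cast hsmall
    have hsge2 : 2 ≤ Real.sqrt n₃ := by nlinarith
    set T := Nat.sqrt n₃ + 1 with hTdef
    have hT1 : 0 < T := by omega
    obtain ⟨u, v, δ, hv1, hvT, huv, hδT, hcase⟩ := pigeon n₂ n₃ T (by omega) hn₂₃ hT1
    have hsqle : ((Nat.sqrt n₃ : ℕ) : ℝ) ≤ Real.sqrt n₃ := by
      have h' : ((Nat.sqrt n₃ : ℕ) : ℝ) ^ 2 ≤ (n₃ : ℝ) := by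
        exact_mod_cast Nat.sqrt_le' n₃
      nlinarith [Nat.cast_nonneg (α := ℝ) (Nat.sqrt n₃)]
    have hTs : (T : ℝ) ≤ Real.sqrt n₃ + 1 := by
      rw [hTdef]
      push_cast
      linarith
    have hsT : Real.sqrt n₃ ≤ (T : ℝ) := by
      have h'' : n₃ < T ^ 2 := by
        rw [hTdef, pow_two]
        exact Nat.lt_succ_sqrt n₃
      have h' : (n₃ : ℝ) ≤ (T : ℝ) ^ 2 := by exact_mod_cast Nat.le_of_lt h''
      have h2 := Real.sqrt_le_sqrt h'
      rwa [Real.sqrt_sq (by positivity)] at h2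
    have hδs : (δ : ℝ) ≤ Real.sqrt n₃ := by
      have h1 : (δ : ℝ) * (T : ℝ) ≤ (n₃ : ℝ) := by exact_mod_cast Nat.le_of_lt hδT
      have h2 : (δ : ℝ) * Real.sqrt n₃ ≤ (δ : ℝ) * (T : ℝ) :=
        mul_le_mul_of_nonneg_left hsT (Nat.cast_nonneg _)
      have hsp : (0 : ℝ) < Real.sqrt n₃ := by linarith
      have h3 : (δ : ℝ) * Real.sqrt n₃ ≤ Real.sqrt n₃ * Real.sqrt n₃ := by
        rw [hs2]; linarith
      exact le_of_mul_le_mul_right h3 hsp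
    have hvs : (v : ℝ) ≤ Real.sqrt n₃ + 1 := by
      have : (v : ℝ) ≤ (T : ℝ) := by exact_mod_cast hvT
      linarith
    have hus : (u : ℝ) ≤ Real.sqrt n₃ + 1 := by
      have : (u : ℝ) ≤ (v : ℝ) := by exact_mod_cast huv
      linarith
    have hα2ne : ((d₂ : ℚ) * g ^ n₂ / (d₂ + g - 1)) ≠ 0 := by
      have hd2q : (0 : ℚ) < d₂ := by exact_mod_cast hd₂
      have hgq : (3 : ℚ) ≤ g := by exact_mod_cast hg
      have hnum : (0 : ℚ) < (d₂ : ℚ) * g ^ n₂ := by positivity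
      have hden : (0 : ℚ) < (d₂ : ℚ) + g - 1 := by linarith
      exact ne_of_gt (div_pos hnum hden)
    rcases hcase with hc1 | hc2
    · have hYne : (d₂ : ℤ) ^ v * ((d₃ : ℤ) + g - 1) ^ u * g ^ δ
          - ((d₂ : ℤ) + g - 1) ^ v * (d₃ : ℤ) ^ u ≠ 0 := by
        intro h0
        exact multdep_contra _ _ hα2ne u v hv1
          (ratio_eq g d₂ d₃ n₂ n₃ u v δ hg hc1 (sub_eq_zero.mp h0)) hind
      have hbound := case_bound a g d₂ d₃ n₂ n₃ u v δ hg ha hd₂' hd₃' hA2 hA3 hc1 hYne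
      apply glue g a n₃ (2 * u + v + δ) hg hbound
      push_cast
      linarith
    · have hYne : (d₃ : ℤ) ^ u * ((d₂ : ℤ) + g - 1) ^ v * g ^ δ
          - ((d₃ : ℤ) + g - 1) ^ u * (d₂ : ℤ) ^ v ≠ 0 := by
        intro h0
        exact multdep_contra _ _ hα2ne u v hv1
          (ratio_eq g d₃ d₂ n₃ n₂ v u δ hg hc2 (sub_eq_zero.mp h0)).symm hind
      have hbound := case_bound a g d₃ d₂ n₃ n₂ v u δ hg ha hd₃' hd₂' hA3 hA2 hc2 hYne
      apply glue g a n₃ (2 * v + u + δ) hg hbound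
      push_cast
      linarith
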